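/- Let S¹, S² be two parameter values such that g(S¹,y) ≤ g(S²,y) for all y ∈ [0,M] and (b(S²,y)+D)/g(S²,y) ≤ (b(S¹,y)+D)/g(S¹,y) for all y ∈ (0,M). Fix x ∈ (0,M) and X ≥ 0, and for i = 1,2 let T^{Sⁱ}_x(X) be the unique time T ≥ 0 with ∫_0^T (b(Sⁱ, A^{Sⁱ}_u(x)) + D) du = X. Then A^{S¹}_{T^{S¹}_x(X)}(x) ≤ A^{S²}_{T^{S²}_x(X)}(x). -/

import Mathlib

open MeasureTheory Set Filter Topology

private lemma prim_cont (f : ℝ → ℝ) (C : ℝ)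
    (hint : ∀ t : ℝ, 0 ≤ t → IntervalIntegrable f volume 0 t)
    (hbdd : ∀ u : ℝ, 0 ≤ u → |f u| ≤ C) :
    ContinuousOn (fun t => ∫ u in (0:ℝ)..t, f u) (Set.Ici 0) := by
  have hC0 : 0 ≤ C := le_trans (abs_nonneg _) (hbdd 0 le_rfl)
  apply LipschitzOnWith.continuousOn (K := C.toNNReal)
  rw [lipschitzOnWith_iff_dist_le_mul]
  intro t ht s hs
  rw [Real.dist_eq, Real.dist_eq]
  have hsub : (∫ u in (0:ℝ)..t, f u) - ∫ u in (0:ℝ)..s, f u = ∫ u in s..t, f u :=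
    intervalIntegral.integral_interval_sub_left (hint t ht) (hint s hs)
  rw [hsub]
  have hb : ∀ u ∈ Set.uIoc s t, ‖f u‖ ≤ C := by
    intro u hu
    have hu0 : 0 ≤ u := ((le_min hs ht).trans hu.1.le)
    simpa [Real.norm_eq_abs] using hbdd u hu0
  have := intervalIntegral.norm_integral_le_of_norm_le_const hb
  simpa [Real.norm_eq_abs, Real.coe_toNNReal C hC0] using this

private lemma flow_integrable (M : ℝ) (g : ℝ → ℝ) (A : ℝ → ℝ → ℝ) (x : ℝ)
    (hg_cont : ContinuousOn g (Set.Icc 0 M))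
    (hmem : ∀ t : ℝ, 0 ≤ t → A t x ∈ Set.Ioc 0 M)
    (heq : ∀ t : ℝ, 0 ≤ t → A t x = x + ∫ u in (0:ℝ)..t, g (A u x)) :
    ∀ t : ℝ, 0 ≤ t → IntervalIntegrable (fun u => g (A u x)) volume 0 t := by
  obtain ⟨C, hC⟩ := isCompact_Icc.exists_bound_of_continuousOn hg_cont
  set f : ℝ → ℝ := fun u => g (A u x) with hf
  have hfbdd : ∀ u : ℝ, 0 ≤ u → ‖f u‖ ≤ C := fun u hu =>
    hC _ (Set.Ioc_subset_Icc_self (hmem u hu))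
  by_contra hcon
  push_neg at hcon
  obtain ⟨t₀, ht₀, hbad⟩ := hcon
  set Sset := {t : ℝ | 0 ≤ t ∧ ¬ IntervalIntegrable f volume 0 t} with hSset
  have hne : Sset.Nonempty := ⟨t₀, ht₀, hbad⟩
  have hbddb : BddBelow Sset := ⟨0, fun t ht => ht.1⟩
  set τ := sInf Sset with hτ
  have hτ0 : 0 ≤ τ := le_csInf hne fun t ht => ht.1
  have hup : ∀ t, τ < t → t ∈ Sset := by
    intro t ht
    obtain ⟨s, hs, hst⟩ := exists_lt_of_csInf_lt hne ht
    refine ⟨le_trans hs.1 hst.le, fun hii => hs.2 (hii.mono_set ?_)⟩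
    rw [Set.uIcc_of_le hs.1, Set.uIcc_of_le (hs.1.trans hst.le)]
    exact Set.Icc_subset_Icc le_rfl hst.le
  have hconstA : ∀ t, τ < t → A t x = x := by
    intro t ht
    have h1 := heq t (hτ0.trans ht.le)
    rw [intervalIntegral.integral_undef (hup t ht).2] at h1
    simpa using h1
  have hfconst : ∀ u, τ < u → f u = g x := fun u hu => by
    simp only [hf]; rw [hconstA u hu]
  have hgood : ∀ t, 0 ≤ t → t < τ → IntervalIntegrable f volume 0 t := by
    intro t ht htτ
    by_contra hb2
    exact absurd (csInf_le hbddb ⟨ht, hb2⟩) (not_le.2 htτ)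
  have h2 : IntervalIntegrable f volume τ (τ + 1) := by
    rw [intervalIntegrable_iff_integrableOn_Ioc_of_le (by linarith)]
    have hconst : IntegrableOn (fun _ : ℝ => g x) (Set.Ioc τ (τ + 1)) volume :=
      integrableOn_const measure_Ioc_lt_top.ne
    exact hconst.congr_fun (fun u hu => (hfconst u hu.1).symm) measurableSet_Ioc
  have h1 : IntervalIntegrable f volume 0 τ := by
    rcases eq_or_lt_of_le hτ0 with h0 | h0
    · rw [← h0]
    · rw [intervalIntegrable_iff_integrableOn_Ioc_of_le hτ0]
      have hIoo : IntegrableOn f (Set.Ioo 0 τ) volume := by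
        have hunion : Set.Ioo (0:ℝ) τ = ⋃ n : ℕ, Set.Ioc 0 (τ - τ / (n + 2)) := by
          ext u
          simp only [Set.mem_Ioo, Set.mem_iUnion, Set.mem_Ioc]
          constructor
          · rintro ⟨h1, h2⟩
            obtain ⟨n, hn⟩ := exists_nat_gt (τ / (τ - u))
            refine ⟨n, h1, ?_⟩
            have hτu : (0:ℝ) < τ - u := by linarith
            have hn2 : τ / (τ - u) < (n:ℝ) + 2 := lt_of_lt_of_le hn (by linarith)
            rw [div_lt_iff₀ hτu] at hn2
            have hpos : (0:ℝ) < (n:ℝ) + 2 := by positivity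
            rw [le_sub_comm, div_le_iff₀ hpos]
            nlinarith
          · rintro ⟨n, h1, h2⟩
            have hpos : (0:ℝ) < τ / ((n:ℝ) + 2) := by positivity
            exact ⟨h1, by linarith⟩
        have hmeas : AEStronglyMeasurable f (volume.restrict (Set.Ioo 0 τ)) := by
          rw [hunion, aestronglyMeasurable_iUnion_iff]
          intro n
          have hnn : 0 ≤ τ - τ / ((n:ℝ) + 2) := by
            have h1 : τ / ((n:ℝ) + 2) ≤ τ := by
              rw [div_le_iff₀ (by positivity : (0:ℝ) < (n:ℝ)+2)]
              nlinarith
            linarith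
          have hlt : τ - τ / ((n:ℝ) + 2) < τ := by
            have : 0 < τ / ((n:ℝ) + 2) := by positivity
            linarith
          have hii := hgood _ hnn hlt
          rw [intervalIntegrable_iff_integrableOn_Ioc_of_le hnn] at hii
          exact hii.aestronglyMeasurable
        refine ⟨hmeas, HasFiniteIntegral.restrict_of_bounded (C := C) measure_Ioo_lt_top ?_⟩
        exact ae_restrict_of_forall_mem measurableSet_Ioo fun u hu => hfbdd u hu.1.le
      exact hIoo.congr_set_ae MeasureTheory.Ioo_ae_eq_Ioc.symm
  exact (hup (τ + 1) (by linarith)).2 (h1.trans h2)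
private lemma flow_cont (M : ℝ) (g : ℝ → ℝ) (A : ℝ → ℝ → ℝ) (x : ℝ)
    (hg_cont : ContinuousOn g (Set.Icc 0 M))
    (hmem : ∀ t : ℝ, 0 ≤ t → A t x ∈ Set.Ioc 0 M)
    (heq : ∀ t : ℝ, 0 ≤ t → A t x = x + ∫ u in (0:ℝ)..t, g (A u x)) :
    ContinuousOn (fun t => A t x) (Set.Ici 0) := by
  obtain ⟨C, hC⟩ := isCompact_Icc.exists_bound_of_continuousOn hg_cont
  have hint := flow_integrable M g A x hg_cont hmem heq
  have hbdd : ∀ u : ℝ, 0 ≤ u → |g (A u x)| ≤ C := fun u hu =>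
    hC _ (Set.Ioc_subset_Icc_self (hmem u hu))
  have h : ContinuousOn (fun t => x + ∫ u in (0:ℝ)..t, g (A u x)) (Set.Ici 0) :=
    continuousOn_const.add (prim_cont (fun u => g (A u x)) C hint hbdd)
  exact h.congr fun t ht => heq t ht

private lemma flow_mono (M : ℝ) (g : ℝ → ℝ) (A : ℝ → ℝ → ℝ) (x : ℝ)
    (hg_M : g M = 0)
    (hg_pos : ∀ y ∈ Set.Ioo (0:ℝ) M, 0 < g y)
    (hmem : ∀ t : ℝ, 0 ≤ t → A t x ∈ Set.Ioc 0 M)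
    (heq : ∀ t : ℝ, 0 ≤ t → A t x = x + ∫ u in (0:ℝ)..t, g (A u x))
    (hint : ∀ t : ℝ, 0 ≤ t → IntervalIntegrable (fun u => g (A u x)) volume 0 t) :
    ∀ s t : ℝ, 0 ≤ s → s ≤ t → A s x ≤ A t x := by
  intro s t hs hst
  have ht : 0 ≤ t := hs.trans hst
  have hsub : A t x - A s x = ∫ u in s..t, g (A u x) := by
    rw [heq t ht, heq s hs]
    have := intervalIntegral.integral_interval_sub_left (hint t ht) (hint s hs)
    linarith [this]
  have hnn : 0 ≤ ∫ u in s..t, g (A u x) := by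
    apply intervalIntegral.integral_nonneg hst
    intro u hu
    have hu0 : 0 ≤ u := hs.trans hu.1
    have hm := hmem u hu0
    rcases eq_or_lt_of_le hm.2 with hMeq | hMlt
    · rw [hMeq, hg_M]
    · exact (hg_pos _ ⟨hm.1, hMlt⟩).le
  linarith

private lemma flow_zero (g : ℝ → ℝ) (A : ℝ → ℝ → ℝ) (x : ℝ)
    (heq : ∀ t : ℝ, 0 ≤ t → A t x = x + ∫ u in (0:ℝ)..t, g (A u x)) :
    A 0 x = x := by simpa using heq 0 le_rfl

private lemma flow_deriv (M : ℝ) (g : ℝ → ℝ) (A : ℝ → ℝ → ℝ) (x : ℝ)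
    (hg_cont : ContinuousOn g (Set.Icc 0 M))
    (hmem : ∀ t : ℝ, 0 ≤ t → A t x ∈ Set.Ioc 0 M)
    (heq : ∀ t : ℝ, 0 ≤ t → A t x = x + ∫ u in (0:ℝ)..t, g (A u x)) :
    ∀ t : ℝ, 0 < t → HasDerivAt (fun s => A s x) (g (A t x)) t := by
  intro t ht
  have hint := flow_integrable M g A x hg_cont hmem heq
  have hφc := flow_cont M g A x hg_cont hmem heq
  have hfc : ContinuousOn (fun u => g (A u x)) (Set.Ici 0) := by
    apply hg_cont.comp hφc
    exact fun u hu => Set.Ioc_subset_Icc_self (hmem u hu)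
  have hca : ContinuousAt (fun u => g (A u x)) t :=
    (hfc.mono Set.Ioi_subset_Ici_self).continuousAt (Ioi_mem_nhds ht)
  have hmeas : StronglyMeasurableAtFilter (fun u => g (A u x)) (𝓝 t) volume :=
    ContinuousOn.stronglyMeasurableAtFilter isOpen_Ioi
      (hfc.mono Set.Ioi_subset_Ici_self) t ht
  have hprim : HasDerivAt (fun s => ∫ u in (0:ℝ)..s, g (A u x)) (g (A t x)) t :=
    intervalIntegral.integral_hasDerivAt_right (hint t ht.le) hmeas hca
  have hev : (fun s => A s x) =ᶠ[𝓝 t] fun s => x + ∫ u in (0:ℝ)..s, g (A u x) :=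
    eventually_of_mem (Ioi_mem_nhds ht) fun s hs => heq s (le_of_lt hs)
  exact ((hprim.const_add x).congr_of_eventuallyEq hev)
private lemma flow_changevar (M D : ℝ) (hD : 0 < D) (b g : ℝ → ℝ) (A : ℝ → ℝ → ℝ) (x : ℝ)
    (hb_cont : ContinuousOn b (Set.Icc 0 M))
    (hg_cont : ContinuousOn g (Set.Icc 0 M))
    (hg_M : g M = 0)
    (hg_pos : ∀ y ∈ Set.Ioo (0:ℝ) M, 0 < g y)
    (hx : x ∈ Set.Ioo (0:ℝ) M)
    (hmem : ∀ t : ℝ, 0 ≤ t → A t x ∈ Set.Ioc 0 M)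
    (heq : ∀ t : ℝ, 0 ≤ t → A t x = x + ∫ u in (0:ℝ)..t, g (A u x))
    (T : ℝ) (hT : 0 ≤ T) (hTM : A T x < M) :
    (∫ u in (0:ℝ)..T, b (A u x) + D) = ∫ y in x..(A T x), (b y + D) / g y := by
  have hint := flow_integrable M g A x hg_cont hmem heq
  have hφc := flow_cont M g A x hg_cont hmem heq
  have hmono := flow_mono M g A x hg_M hg_pos hmem heq hint
  have hφ0 := flow_zero g A x heq
  rcases eq_or_lt_of_le hT with h0 | h0
  · rw [← h0]
    simp [hφ0]
  -- Notation
  set φ : ℝ → ℝ := fun t => A t x with hφ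
  set ρ : ℝ → ℝ := fun y => (b y + D) / g y with hρ
  set f₁ : ℝ → ℝ := fun u => b (φ u) + D with hf₁
  set H : ℝ → ℝ := fun z => ∫ y in x..z, ρ y with hH
  set Φ : ℝ → ℝ := fun t => ∫ u in (0:ℝ)..t, f₁ u with hΦ
  -- range facts
  have hrange : ∀ t : ℝ, 0 ≤ t → t ≤ T → φ t ∈ Set.Icc x (A T x) := by
    intro t ht htT
    exact ⟨by simpa [hφ0] using hmono 0 t le_rfl ht, hmono t T ht htT⟩
  have hIccsub : Set.Icc x (A T x) ⊆ Set.Ioo 0 M := fun z hz =>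
    ⟨lt_of_lt_of_le hx.1 hz.1, lt_of_le_of_lt hz.2 hTM⟩
  -- continuity of ρ on Ioo 0 M
  have hρc : ContinuousOn ρ (Set.Ioo 0 M) := by
    apply ContinuousOn.div
    · exact ((hb_cont.mono Set.Ioo_subset_Icc_self).add continuousOn_const)
    · exact hg_cont.mono Set.Ioo_subset_Icc_self
    · exact fun y hy => ne_of_gt (hg_pos y hy)
  -- continuity of f₁ on Ici 0
  have hf₁c : ContinuousOn f₁ (Set.Ici 0) := by
    apply ContinuousOn.add _ continuousOn_const
    apply hb_cont.comp hφc
    exact fun u hu => Set.Ioc_subset_Icc_self (hmem u hu)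
  have hf₁int : ∀ t : ℝ, 0 ≤ t → IntervalIntegrable f₁ volume 0 t := by
    intro t ht
    apply ContinuousOn.intervalIntegrable
    apply hf₁c.mono
    rw [Set.uIcc_of_le ht]
    exact fun u hu => hu.1
  -- derivative of H
  have hHd : ∀ z ∈ Set.Icc x (A T x), HasDerivAt H (ρ z) z := by
    intro z hz
    have hzI : z ∈ Set.Ioo (0:ℝ) M := hIccsub hz
    apply intervalIntegral.integral_hasDerivAt_right
    · apply ContinuousOn.intervalIntegrable
      apply hρc.mono
      exact Set.ordConnected_Ioo.uIcc_subset (hIccsub ⟨le_rfl, hz.1.trans hz.2⟩) hzI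
    · exact ContinuousOn.stronglyMeasurableAtFilter isOpen_Ioo hρc z hzI
    · exact hρc.continuousAt (Ioo_mem_nhds hzI.1 hzI.2)
  -- derivative of Φ
  have hΦd : ∀ t : ℝ, 0 < t → HasDerivAt Φ (f₁ t) t := by
    intro t ht
    apply intervalIntegral.integral_hasDerivAt_right (hf₁int t ht.le)
    · exact ContinuousOn.stronglyMeasurableAtFilter isOpen_Ioi
        (hf₁c.mono Set.Ioi_subset_Ici_self) t ht
    · exact (hf₁c.mono Set.Ioi_subset_Ici_self).continuousAt (Ioi_mem_nhds ht)
  -- derivative of G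
  set G : ℝ → ℝ := fun t => Φ t - H (φ t) with hG
  have hGd : ∀ t : ℝ, 0 < t → t ≤ T → HasDerivAt G 0 t := by
    intro t ht htT
    have hzt := hrange t ht.le htT
    have h1 := hΦd t ht
    have hφd : HasDerivAt φ (g (φ t)) t := flow_deriv M g A x hg_cont hmem heq t ht
    have h2 : HasDerivAt (fun s => H (φ s)) (ρ (φ t) * g (φ t)) t :=
      (hHd (φ t) hzt).comp t hφd
    have hcancel : ρ (φ t) * g (φ t) = f₁ t :=
      div_mul_cancel₀ _ (ne_of_gt (hg_pos _ (hIccsub hzt)))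
    have := h1.sub h2
    rw [hcancel] at this
    rw [sub_self] at this; exact this
  -- G is constant on (0, T]
  have hkey : ∀ ε : ℝ, 0 < ε → ε ≤ T → G T = G ε := by
    intro ε hε hεT
    have hcont : ContinuousOn G (Set.Icc ε T) := by
      intro t htm
      exact ((hGd t (hε.trans_le htm.1) htm.2).continuousAt).continuousWithinAt
    have hder : ∀ t ∈ Set.Ico ε T, HasDerivWithinAt G 0 (Set.Ici t) t := fun t htm =>
      (hGd t (hε.trans_le htm.1) htm.2.le).hasDerivWithinAt
    exact constant_of_has_deriv_right_zero hcont hder T ⟨hεT, le_rfl⟩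
  -- limit as ε → 0⁺
  have hG0 : G 0 = 0 := by
    simp [hG, hΦ, hH, hφ, hφ0]
  have hGc0 : ContinuousWithinAt G (Set.Ici 0) 0 := by
    apply ContinuousWithinAt.sub
    · obtain ⟨C, hC⟩ := isCompact_Icc.exists_bound_of_continuousOn
        ((hb_cont.add continuousOn_const) : ContinuousOn (fun y => b y + D) (Set.Icc 0 M))
      have hbdd : ∀ u : ℝ, 0 ≤ u → |f₁ u| ≤ C := fun u hu =>
        hC _ (Set.Ioc_subset_Icc_self (hmem u hu))
      exact (prim_cont f₁ C hf₁int hbdd) 0 Set.self_mem_Ici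
    · have hxle : x ≤ A T x := by
        calc x = A 0 x := hφ0.symm
          _ ≤ A T x := hmono 0 T le_rfl hT
      have hHx : ContinuousAt H x := (hHd x ⟨le_rfl, hxle⟩).continuousAt
      have hHx' : ContinuousAt H (φ 0) := by
        have hphp : φ 0 = x := hφ0
        rw [hphp]; exact hHx
      exact hHx'.comp_continuousWithinAt (hφc 0 Set.self_mem_Ici)
  have hfinal : G T = G 0 := by
    have h1 : Tendsto G (𝓝[>] (0:ℝ)) (𝓝 (G 0)) :=
      hGc0.mono_left (nhdsWithin_mono 0 Set.Ioi_subset_Ici_self)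
    have h2 : G =ᶠ[𝓝[>] (0:ℝ)] fun _ => G T :=
      eventually_of_mem (Ioc_mem_nhdsGT h0) fun ε hε => (hkey ε hε.1 hε.2).symm
    exact (tendsto_nhds_unique (h1.congr' h2) tendsto_const_nhds).symm
  have : G T = 0 := by rw [hfinal, hG0]
  have hGT : Φ T - H (φ T) = 0 := this
  simp only [hΦ, hH, hf₁, hρ, hφ] at hGT
  linarith
theorem statement10 (M D : ℝ) (hM : 0 < M) (hD : 0 < D)
    (b1 g1 b2 g2 : ℝ → ℝ)
    (hb1_cont : ContinuousOn b1 (Set.Icc 0 M))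
    (hb1_nonneg : ∀ x ∈ Set.Icc (0:ℝ) M, 0 ≤ b1 x)
    (hb2_cont : ContinuousOn b2 (Set.Icc 0 M))
    (hb2_nonneg : ∀ x ∈ Set.Icc (0:ℝ) M, 0 ≤ b2 x)
    (hg1_cont : ContinuousOn g1 (Set.Icc 0 M))
    (hg1_diff : ContDiffOn ℝ 1 g1 (Set.Ioo 0 M))
    (hg1_0 : g1 0 = 0) (hg1_M : g1 M = 0)
    (hg1_pos : ∀ x ∈ Set.Ioo (0:ℝ) M, 0 < g1 x)
    (hg2_cont : ContinuousOn g2 (Set.Icc 0 M))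
    (hg2_diff : ContDiffOn ℝ 1 g2 (Set.Ioo 0 M))
    (hg2_0 : g2 0 = 0) (hg2_M : g2 M = 0)
    (hg2_pos : ∀ x ∈ Set.Ioo (0:ℝ) M, 0 < g2 x)
    (A1 A2 : ℝ → ℝ → ℝ)
    (hA1_mem : ∀ x ∈ Set.Ioo (0:ℝ) M, ∀ t : ℝ, 0 ≤ t → A1 t x ∈ Set.Ioc 0 M)
    (hA1_eq : ∀ x ∈ Set.Ioo (0:ℝ) M, ∀ t : ℝ, 0 ≤ t →
      A1 t x = x + ∫ u in (0:ℝ)..t, g1 (A1 u x))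
    (hA2_mem : ∀ x ∈ Set.Ioo (0:ℝ) M, ∀ t : ℝ, 0 ≤ t → A2 t x ∈ Set.Ioc 0 M)
    (hA2_eq : ∀ x ∈ Set.Ioo (0:ℝ) M, ∀ t : ℝ, 0 ≤ t →
      A2 t x = x + ∫ u in (0:ℝ)..t, g2 (A2 u x))
    (hg_le : ∀ y ∈ Set.Icc (0:ℝ) M, g1 y ≤ g2 y)
    (hratio : ∀ y ∈ Set.Ioo (0:ℝ) M, (b2 y + D) / g2 y ≤ (b1 y + D) / g1 y)
    (x : ℝ) (hx : x ∈ Set.Ioo (0:ℝ) M) (X : ℝ) (hX : 0 ≤ X)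
    (T1 T2 : ℝ) (hT1 : 0 ≤ T1) (hT2 : 0 ≤ T2)
    (hT1X : (∫ u in (0:ℝ)..T1, b1 (A1 u x) + D) = X)
    (hT2X : (∫ u in (0:ℝ)..T2, b2 (A2 u x) + D) = X) :
    A1 T1 x ≤ A2 T2 x := by
  have hmem1 := hA1_mem x hx
  have heq1 := hA1_eq x hx
  have hmem2 := hA2_mem x hx
  have heq2 := hA2_eq x hx
  have hint1 := flow_integrable M g1 A1 x hg1_cont hmem1 heq1
  have hφc1 := flow_cont M g1 A1 x hg1_cont hmem1 heq1
  have hmono1 := flow_mono M g1 A1 x hg1_M hg1_pos hmem1 heq1 hint1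
  have hint2 := flow_integrable M g2 A2 x hg2_cont hmem2 heq2
  have hmono2 := flow_mono M g2 A2 x hg2_M hg2_pos hmem2 heq2 hint2
  have hφ01 := flow_zero g1 A1 x heq1
  have hφ02 := flow_zero g2 A2 x heq2
  -- continuity of ratio functions
  have hρc1 : ContinuousOn (fun y => (b1 y + D) / g1 y) (Set.Ioo 0 M) :=
    ((hb1_cont.mono Set.Ioo_subset_Icc_self).add continuousOn_const).div
      (hg1_cont.mono Set.Ioo_subset_Icc_self) (fun y hy => ne_of_gt (hg1_pos y hy))
  have hρc2 : ContinuousOn (fun y => (b2 y + D) / g2 y) (Set.Ioo 0 M) :=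
    ((hb2_cont.mono Set.Ioo_subset_Icc_self).add continuousOn_const).div
      (hg2_cont.mono Set.Ioo_subset_Icc_self) (fun y hy => ne_of_gt (hg2_pos y hy))
  have hsubI : ∀ z1 z2 : ℝ, 0 < z1 → z1 ≤ z2 → z2 < M → Set.uIcc z1 z2 ⊆ Set.Ioo 0 M := by
    intro z1 z2 hz1 h12 h2M
    exact Set.ordConnected_Ioo.uIcc_subset ⟨hz1, lt_of_le_of_lt h12 h2M⟩
      ⟨lt_of_lt_of_le hz1 h12, h2M⟩
  -- strict monotonicity of H2
  have hH2strict : ∀ z1 z2 : ℝ, x ≤ z1 → z1 < z2 → z2 < M →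
      (∫ y in x..z1, (b2 y + D) / g2 y) < ∫ y in x..z2, (b2 y + D) / g2 y := by
    intro z1 z2 h1 h12 h2M
    have hz1M : z1 < M := lt_trans h12 h2M
    have hii1 : IntervalIntegrable (fun y => (b2 y + D) / g2 y) volume x z1 :=
      (hρc2.mono (hsubI x z1 hx.1 h1 hz1M)).intervalIntegrable
    have hii2 : IntervalIntegrable (fun y => (b2 y + D) / g2 y) volume x z2 :=
      (hρc2.mono (hsubI x z2 hx.1 (h1.trans h12.le) h2M)).intervalIntegrable
    have hii12 : IntervalIntegrable (fun y => (b2 y + D) / g2 y) volume z1 z2 :=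
      (hρc2.mono (hsubI z1 z2 (lt_of_lt_of_le hx.1 h1) h12.le h2M)).intervalIntegrable
    have hdiff := intervalIntegral.integral_interval_sub_left hii2 hii1
    have hpos : 0 < ∫ y in z1..z2, (b2 y + D) / g2 y := by
      apply intervalIntegral.intervalIntegral_pos_of_pos_on hii12 _ h12
      intro y hy
      have hyI : y ∈ Set.Ioo (0:ℝ) M :=
        ⟨lt_trans (lt_of_lt_of_le hx.1 h1) hy.1, lt_trans hy.2 h2M⟩
      have hb := hb2_nonneg y (Set.Ioo_subset_Icc_self hyI)
      exact div_pos (by linarith) (hg2_pos y hyI)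
    linarith
  -- H2 ≤ H1
  have hH12 : ∀ z : ℝ, x ≤ z → z < M →
      (∫ y in x..z, (b2 y + D) / g2 y) ≤ ∫ y in x..z, (b1 y + D) / g1 y := by
    intro z h1 h2
    have hii2 : IntervalIntegrable (fun y => (b2 y + D) / g2 y) volume x z :=
      (hρc2.mono (hsubI x z hx.1 h1 h2)).intervalIntegrable
    have hii1 : IntervalIntegrable (fun y => (b1 y + D) / g1 y) volume x z :=
      (hρc1.mono (hsubI x z hx.1 h1 h2)).intervalIntegrable
    apply intervalIntegral.integral_mono_on h1 hii2 hii1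
    intro y hy
    exact hratio y (hsubI x z hx.1 h1 h2 (by rw [Set.uIcc_of_le h1]; exact hy))
  have hψmem := hA2_mem x hx T2 hT2
  by_cases hψM : A2 T2 x = M
  · rw [hψM]; exact (hA1_mem x hx T1 hT1).2
  have hψlt : A2 T2 x < M := lt_of_le_of_ne hψmem.2 hψM
  have hψge : x ≤ A2 T2 x := by
    calc x = A2 0 x := hφ02.symm
      _ ≤ A2 T2 x := hmono2 0 T2 le_rfl hT2
  have hX2 : X = ∫ y in x..(A2 T2 x), (b2 y + D) / g2 y := by
    rw [← hT2X]
    exact flow_changevar M D hD b2 g2 A2 x hb2_cont hg2_cont hg2_M hg2_pos hx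
      hmem2 heq2 T2 hT2 hψlt
  by_cases hφM : A1 T1 x = M
  · exfalso
    -- integrability of the rate along flow 1
    have hf1c : ContinuousOn (fun u => b1 (A1 u x) + D) (Set.Ici 0) := by
      apply ContinuousOn.add _ continuousOn_const
      apply hb1_cont.comp hφc1
      exact fun u hu => Set.Ioc_subset_Icc_self (hmem1 u hu)
    have hf1int : ∀ t : ℝ, 0 ≤ t → IntervalIntegrable (fun u => b1 (A1 u x) + D) volume 0 t := by
      intro t ht
      apply ContinuousOn.intervalIntegrable
      apply hf1c.mono
      rw [Set.uIcc_of_le ht]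
      exact fun u hu => hu.1
    -- first hitting time of M
    set K := Set.Icc 0 T1 ∩ (fun t => A1 t x) ⁻¹' {M} with hK
    have hKne : K.Nonempty := ⟨T1, ⟨hT1, le_rfl⟩, hφM⟩
    have hKclosed : IsClosed K :=
      (hφc1.mono (fun u (hu : u ∈ Set.Icc 0 T1) => hu.1)).preimage_isClosed_of_isClosed
        isClosed_Icc isClosed_singleton
    have hKbdd : BddBelow K := ⟨0, fun t ht => ht.1.1⟩
    set τ := sInf K with hτdef
    have hτK : τ ∈ K := hKclosed.csInf_mem hKne hKbdd
    have hτM : A1 τ x = M := hτK.2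
    have hτ0 : 0 ≤ τ := hτK.1.1
    have hτT1 : τ ≤ T1 := hτK.1.2
    have hτpos : 0 < τ := by
      rcases eq_or_lt_of_le hτ0 with h | h
      · exfalso
        apply ne_of_lt hx.2
        rw [← hτM, ← h, hφ01]
      · exact h
    have hbefore : ∀ t : ℝ, 0 ≤ t → t < τ → A1 t x < M := by
      intro t ht htτ
      rcases eq_or_lt_of_le ((hA1_mem x hx t ht).2) with h | h
      · exact absurd (csInf_le hKbdd ⟨⟨ht, htτ.le.trans hτT1⟩, h⟩) (not_le.2 htτ)
      · exact h
    have hca : ContinuousAt (fun t => A1 t x) τ := hφc1.continuousAt (Ici_mem_nhds hτpos)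
    have hev1 : ∀ᶠ s in 𝓝[<] τ, A2 T2 x < A1 s x := by
      have h' : ∀ᶠ s in 𝓝 τ, A1 s x ∈ Set.Ioi (A2 T2 x) :=
        hca (Ioi_mem_nhds (by show A2 T2 x < A1 τ x; rw [hτM]; exact hψlt))
      exact h'.filter_mono nhdsWithin_le_nhds
    have hev2 : ∀ᶠ s in 𝓝[<] τ, s ∈ Set.Ioo 0 τ :=
      eventually_of_mem (Ioo_mem_nhdsLT_of_mem ⟨hτpos, le_rfl⟩) fun s hs => hs
    obtain ⟨t, htgt, ht0, htτ⟩ := (hev1.and hev2).exists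
    have htT1 : t ≤ T1 := htτ.le.trans hτT1
    have htM : A1 t x < M := hbefore t ht0.le htτ
    have hchg1 : (∫ u in (0:ℝ)..t, b1 (A1 u x) + D)
        = ∫ y in x..(A1 t x), (b1 y + D) / g1 y :=
      flow_changevar M D hD b1 g1 A1 x hb1_cont hg1_cont hg1_M hg1_pos hx
        hmem1 heq1 t ht0.le htM
    have hXge : (∫ u in (0:ℝ)..t, b1 (A1 u x) + D) ≤ X := by
      rw [← hT1X]
      have hsub := intervalIntegral.integral_interval_sub_left (hf1int T1 hT1) (hf1int t ht0.le)
      have hnn : 0 ≤ ∫ u in t..T1, b1 (A1 u x) + D := by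
        apply intervalIntegral.integral_nonneg htT1
        intro u hu
        have := hb1_nonneg _ (Set.Ioc_subset_Icc_self (hA1_mem x hx u (ht0.le.trans hu.1)))
        linarith
      linarith
    have hxleφt : x ≤ A1 t x := by
      calc x = A1 0 x := hφ01.symm
        _ ≤ A1 t x := hmono1 0 t le_rfl ht0.le
    have h12 := hH12 (A1 t x) hxleφt htM
    have hstrict := hH2strict (A2 T2 x) (A1 t x) hψge htgt htM
    rw [← hX2] at hstrict
    rw [hchg1] at hXge
    linarith
  · have hφlt : A1 T1 x < M := lt_of_le_of_ne (hA1_mem x hx T1 hT1).2 hφM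
    have hX1 : X = ∫ y in x..(A1 T1 x), (b1 y + D) / g1 y := by
      rw [← hT1X]
      exact flow_changevar M D hD b1 g1 A1 x hb1_cont hg1_cont hg1_M hg1_pos hx
        hmem1 heq1 T1 hT1 hφlt
    have hxleφ : x ≤ A1 T1 x := by
      calc x = A1 0 x := hφ01.symm
        _ ≤ A1 T1 x := hmono1 0 T1 le_rfl hT1
    by_contra hcon
    push_neg at hcon
    have hstrict := hH2strict (A2 T2 x) (A1 T1 x) hψge hcon hφlt
    have h12 := hH12 (A1 T1 x) hxleφ hφlt
    rw [← hX2] at hstrict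
    rw [← hX1] at h12
    linarith
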